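/- For the optimization of the Cooperative Mixed NNC rate at the destination, the maximization over T ∈ Υ(V) can be replaced by maximization over all T ⊆ V without changing the value: for any T ⊆ V, if there exists A ⊆ T with Q_T(A) < 0, then removing the relays in A from T (i.e., not using their compressed descriptions) does not decrease, and in fact improves, the resulting minimum min_{S⊆T} R_T(S); hence the maximum over all subsets T ⊆ V equals the maximum restricted to T ∈ Υ(V) = {T ⊆ V : Q_T(S) ≥ 0 for all S ⊆ T}. -/

import Mathlib

/-!
STATEMENT 3: In the optimization of the Cooperative Mixed NNC rate at the destination,
the maximization over `T ∈ Υ(V)` can be replaced by maximization over all `T ⊆ V`: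
for any `T ⊆ V`, if some `A ⊆ T` has `Q_T(A) < 0`, then removing the relays of `A`
from `T` (not using their compressed descriptions) does not decrease the minimum
`min_{S⊆T} R_T(S)`; hence
`max_{T ⊆ V} min_{S⊆T} R_T(S) = max_{T ∈ Υ(V)} min_{S⊆T} R_T(S)`,
where `Υ(V) = {T ⊆ V : Q_T(S) ≥ 0 for all S ⊆ T}`.
-/

set_option synthInstance.maxSize 1000
set_option synthInstance.maxHeartbeats 1000000
set_option maxHeartbeats 2000000

open Finset Real Filter

section Info

variable {Ω : Type} [Fintype Ω]

/-- Probability that the random variable `X` takes the value `a`, under the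
probability mass function `p` on the finite sample space `Ω`. -/
noncomputable def probOf {α : Type} [DecidableEq α] (p : Ω → ℝ) (X : Ω → α) (a : α) : ℝ :=
  ∑ ω : Ω, if X ω = a then p ω else 0

/-- Shannon entropy (in nats) of the random variable `X` under `p`. -/
noncomputable def ent {α : Type} [DecidableEq α] (p : Ω → ℝ) (X : Ω → α) : ℝ :=
  -∑ ω : Ω, p ω * Real.log (probOf p X (X ω))

/-- Conditional mutual information `I(X ; Y | Z)` under the pmf `p`. -/
noncomputable def condMI {α β γ : Type} [DecidableEq α] [DecidableEq β] [DecidableEq γ]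
    (p : Ω → ℝ) (X : Ω → α) (Y : Ω → β) (Z : Ω → γ) : ℝ :=
  ent p (fun ω => (X ω, Z ω)) + ent p (fun ω => (Y ω, Z ω))
    - ent p (fun ω => (X ω, Y ω, Z ω)) - ent p Z

end Info

/-- `f` is a probability mass function on the finite type `α`. -/
def IsPMF {α : Type} [Fintype α] (f : α → ℝ) : Prop :=
  (∀ a, 0 ≤ f a) ∧ ∑ a, f a = 1

/-- Restriction of a tuple `x` to the index set `S`, encoded with `Option`
(`some` on `S`, `none` outside); it carries exactly the information of
the sub-tuple `X_S = {X_i : i ∈ S}`. -/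
def mask {N : ℕ} {𝓐 : Fin N → Type} (S : Finset (Fin N)) (x : ∀ k, 𝓐 k) :
    ∀ k, Option (𝓐 k) :=
  fun k => if k ∈ S then some (x k) else none


section Network

variable {N : ℕ} {𝓠 𝓧 𝓨 : Type} {𝓧r 𝓩 𝓩h : Fin N → Type}
  [Fintype 𝓠] [DecidableEq 𝓠] [Fintype 𝓧] [DecidableEq 𝓧]
  [Fintype 𝓨] [DecidableEq 𝓨]
  [∀ k, Fintype (𝓧r k)] [∀ k, DecidableEq (𝓧r k)]
  [∀ k, Fintype (𝓩 k)] [∀ k, DecidableEq (𝓩 k)]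
  [∀ k, Fintype (𝓩h k)] [∀ k, DecidableEq (𝓩h k)]

/- Sample space: `ω = (q, x, x_N, z_N, ẑ_N, y₁)`. -/

/-- `R_T(S)` of Theorem 1 (with `Sᶜ = T ∖ S`):
`I(X X_{Vᶜ} X_S ; Ẑ_{Sᶜ} Y₁ | X_{Sᶜ} Q) − I(Z_S ; Ẑ_S | X X_{T∪Vᶜ} Ẑ_{Sᶜ} Y₁ Q)`. -/
noncomputable def Rdest
    (p : 𝓠 × 𝓧 × (∀ k, 𝓧r k) × (∀ k, 𝓩 k) × (∀ k, 𝓩h k) × 𝓨 → ℝ)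
    (V T S : Finset (Fin N)) : ℝ :=
  condMI p
    (fun ω => (ω.2.1, mask Vᶜ ω.2.2.1, mask S ω.2.2.1))
    (fun ω => (mask (T \ S) ω.2.2.2.2.1, ω.2.2.2.2.2))
    (fun ω => (mask (T \ S) ω.2.2.1, ω.1))
  - condMI p
    (fun ω => mask S ω.2.2.2.1)
    (fun ω => mask S ω.2.2.2.2.1)
    (fun ω => (ω.2.1, mask (T ∪ Vᶜ) ω.2.2.1, mask (T \ S) ω.2.2.2.2.1, ω.2.2.2.2.2, ω.1))

/-- `Q_T(S)` of Theorem 1: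
`I(X_S ; Ẑ_{Sᶜ} Y₁ | X X_{Sᶜ∪Vᶜ} Q) − I(Z_S ; Ẑ_S | X X_{T∪Vᶜ} Ẑ_{Sᶜ} Y₁ Q)`. -/
noncomputable def Qdest
    (p : 𝓠 × 𝓧 × (∀ k, 𝓧r k) × (∀ k, 𝓩 k) × (∀ k, 𝓩h k) × 𝓨 → ℝ)
    (V T S : Finset (Fin N)) : ℝ :=
  condMI p
    (fun ω => mask S ω.2.2.1)
    (fun ω => (mask (T \ S) ω.2.2.2.2.1, ω.2.2.2.2.2))
    (fun ω => (ω.2.1, mask ((T \ S) ∪ Vᶜ) ω.2.2.1, ω.1))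
  - condMI p
    (fun ω => mask S ω.2.2.2.1)
    (fun ω => mask S ω.2.2.2.2.1)
    (fun ω => (ω.2.1, mask (T ∪ Vᶜ) ω.2.2.1, mask (T \ S) ω.2.2.2.2.1, ω.2.2.2.2.2, ω.1))

/-- `R^{(k)}_{T_k}(S)` of Theorem 1 (with `Sᶜ = T_k ∖ S`):
`I(X ; Ẑ_{T_k} Z_k | X_{Vᶜ} X_{T_k} Q) + I(X_S ; Z_k | X_{Vᶜ∪Sᶜ} Q)
  − I(Ẑ_S ; Z_S | X_{Vᶜ∪T_k} Ẑ_{Sᶜ} Z_k Q)`. -/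
noncomputable def Rrelay
    (p : 𝓠 × 𝓧 × (∀ k, 𝓧r k) × (∀ k, 𝓩 k) × (∀ k, 𝓩h k) × 𝓨 → ℝ)
    (V : Finset (Fin N)) (k : Fin N) (T S : Finset (Fin N)) : ℝ :=
  condMI p
    (fun ω => ω.2.1)
    (fun ω => (mask T ω.2.2.2.2.1, ω.2.2.2.1 k))
    (fun ω => (mask (Vᶜ ∪ T) ω.2.2.1, ω.1))
  + condMI p
    (fun ω => mask S ω.2.2.1)
    (fun ω => ω.2.2.2.1 k)
    (fun ω => (mask (Vᶜ ∪ (T \ S)) ω.2.2.1, ω.1))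
  - condMI p
    (fun ω => mask S ω.2.2.2.2.1)
    (fun ω => mask S ω.2.2.2.1)
    (fun ω => (mask (Vᶜ ∪ T) ω.2.2.1, mask (T \ S) ω.2.2.2.2.1, ω.2.2.2.1 k, ω.1))

/-- `Q^{(k)}_T(S)` of Theorem 1:
`I(X_S ; Z_k | X_{Vᶜ∪Sᶜ} Q) − I(Ẑ_S ; Z_S | X X_{Vᶜ∪T} Ẑ_{Sᶜ} Z_k Q)`. -/
noncomputable def Qrelay
    (p : 𝓠 × 𝓧 × (∀ k, 𝓧r k) × (∀ k, 𝓩 k) × (∀ k, 𝓩h k) × 𝓨 → ℝ)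
    (V : Finset (Fin N)) (k : Fin N) (T S : Finset (Fin N)) : ℝ :=
  condMI p
    (fun ω => mask S ω.2.2.1)
    (fun ω => ω.2.2.2.1 k)
    (fun ω => (mask (Vᶜ ∪ (T \ S)) ω.2.2.1, ω.1))
  - condMI p
    (fun ω => mask S ω.2.2.2.2.1)
    (fun ω => mask S ω.2.2.2.1)
    (fun ω => (ω.2.1, mask (Vᶜ ∪ T) ω.2.2.1, mask (T \ S) ω.2.2.2.2.1, ω.2.2.2.1 k, ω.1))

/-- The admissible joint distribution
`P_Q P_{X X_{Vᶜ}|Q} P_{Y₁ Z_N|X X_N} ∏_{j∈V} P_{X_j|Q} P_{Ẑ_j|X_j Z_j Q}` of the class `𝒫`. -/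
noncomputable def jointDist (V : Finset (Fin N))
    (W : 𝓧 → (∀ k, 𝓧r k) → ((∀ k, 𝓩 k) × 𝓨) → ℝ)
    (pQ : 𝓠 → ℝ)
    (pS : 𝓠 → 𝓧 × (∀ k : {k : Fin N // k ∉ V}, 𝓧r k.1) → ℝ)
    (pXj : ∀ j : Fin N, 𝓠 → 𝓧r j → ℝ)
    (pZh : ∀ j : Fin N, 𝓠 → 𝓧r j → 𝓩 j → 𝓩h j → ℝ) :
    𝓠 × 𝓧 × (∀ k, 𝓧r k) × (∀ k, 𝓩 k) × (∀ k, 𝓩h k) × 𝓨 → ℝ :=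
  fun ω =>
    pQ ω.1 * pS ω.1 (ω.2.1, fun k => ω.2.2.1 k.1)
      * (∏ j ∈ V, pXj j ω.1 (ω.2.2.1 j))
      * W ω.2.1 ω.2.2.1 (ω.2.2.2.1, ω.2.2.2.2.2)
      * ∏ j ∈ V, pZh j ω.1 (ω.2.2.1 j) (ω.2.2.2.1 j) (ω.2.2.2.2.1 j)

/-- The destination-decoding term
`max_{T ∈ Υ(V)} min_{S ⊆ T} R_T(S)`. -/
noncomputable def destRate
    (p : 𝓠 × 𝓧 × (∀ k, 𝓧r k) × (∀ k, 𝓩 k) × (∀ k, 𝓩h k) × 𝓨 → ℝ)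
    (V : Finset (Fin N)) : ℝ :=
  ⨆ T : {T : Finset (Fin N) // T ⊆ V ∧ ∀ S ⊆ T, 0 ≤ Qdest p V T S},
    ⨅ S : {S : Finset (Fin N) // S ⊆ T.1}, Rdest p V T.1 S.1

/-- The relay-`k`-decoding term
`max_{T_k ∈ Υ_k(V)} min_{S ⊆ T_k} R^{(k)}_{T_k}(S)`. -/
noncomputable def relayRate
    (p : 𝓠 × 𝓧 × (∀ k, 𝓧r k) × (∀ k, 𝓩 k) × (∀ k, 𝓩h k) × 𝓨 → ℝ)
    (V : Finset (Fin N)) (k : Fin N) : ℝ :=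
  ⨆ T : {T : Finset (Fin N) // T ⊆ V ∧ ∀ S ⊆ T, 0 ≤ Qrelay p V k T S},
    ⨅ S : {S : Finset (Fin N) // S ⊆ T.1}, Rrelay p V k T.1 S.1

end Network

/-- A block code of length `n` with `M` messages for the memoryless unicast network
with `N` relays: an encoder, causal relay functions, and a decoder. -/
structure NetCode {N : ℕ} (𝓧 : Type) (𝓧r 𝓩 : Fin N → Type) (𝓨 : Type) (n M : ℕ) where
  enc : Fin M → Fin n → 𝓧
  relay : ∀ (k : Fin N) (i : Fin n), (Fin i.1 → 𝓩 k) → 𝓧r k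
  dec : (Fin n → 𝓨) → Fin M

section Coding

variable {N : ℕ} {𝓧 𝓨 : Type} {𝓧r 𝓩 : Fin N → Type}
  [Fintype 𝓧] [Fintype 𝓨] [DecidableEq 𝓨]
  [∀ k, Fintype (𝓧r k)] [∀ k, Fintype (𝓩 k)] [∀ k, DecidableEq (𝓩 k)]

/-- Average error probability of a code over the `n`-fold memoryless extension of the
network `W = P_{Y₁ Z_N | X X_N}`, with the relay inputs produced causally. -/
noncomputable def avgErr {n M : ℕ}
    (W : 𝓧 → (∀ k, 𝓧r k) → ((∀ k, 𝓩 k) × 𝓨) → ℝ)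
    (C : NetCode 𝓧 𝓧r 𝓩 𝓨 n M) : ℝ :=
  (M : ℝ)⁻¹ * ∑ w : Fin M, ∑ zs : Fin n → ∀ k, 𝓩 k, ∑ ys : Fin n → 𝓨,
    (∏ i : Fin n,
      W (C.enc w i)
        (fun k => C.relay k i (fun j => zs ⟨j.1, j.2.trans i.2⟩ k))
        (zs i, ys i))
    * (if C.dec ys = w then 0 else 1)

/-- `R` is an achievable rate for the unicast network `W`: there are codes of
arbitrarily large blocklength with `≈ 2^{nR}` messages and vanishing
average error probability. -/
def AchievableRate
    (W : 𝓧 → (∀ k, 𝓧r k) → ((∀ k, 𝓩 k) × 𝓨) → ℝ) (R : ℝ) : Prop :=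
  ∀ ε > (0 : ℝ), ∃ (n M : ℕ) (C : NetCode 𝓧 𝓧r 𝓩 𝓨 n M),
    0 < n ∧ R - ε ≤ Real.log M / n ∧ avgErr W C ≤ ε

end Coding


section Core

variable {Ω : Type} [Fintype Ω] {α β γ δ : Type}
  [DecidableEq α] [DecidableEq β] [DecidableEq γ] [DecidableEq δ]
  {p : Ω → ℝ}

lemma probOf_nonneg (hp : ∀ ω, 0 ≤ p ω) (X : Ω → α) (a : α) : 0 ≤ probOf p X a := by
  apply Finset.sum_nonneg
  intro ω _
  split <;> simp [hp ω]

lemma le_probOf (hp : ∀ ω, 0 ≤ p ω) (X : Ω → α) (ω₀ : Ω) : p ω₀ ≤ probOf p X (X ω₀) := by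
  classical
  have := Finset.single_le_sum (f := fun ω => if X ω = X ω₀ then p ω else 0)
    (fun ω _ => by split <;> simp [hp ω]) (Finset.mem_univ ω₀)
  simpa [probOf] using this

lemma probOf_fiber_congr {X : Ω → α} {Y : Ω → β} (ω : Ω)
    (h : ∀ ω', X ω' = X ω ↔ Y ω' = Y ω) :
    probOf p X (X ω) = probOf p Y (Y ω) := by
  unfold probOf
  apply Finset.sum_congr rfl
  intro ω' _
  by_cases hx : X ω' = X ω
  · rw [if_pos hx, if_pos ((h ω').1 hx)]
  · rw [if_neg hx, if_neg (fun hy => hx ((h ω').2 hy))]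

lemma ent_congr {X : Ω → α} {Y : Ω → β}
    (h : ∀ ω ω', X ω = X ω' ↔ Y ω = Y ω') : ent p X = ent p Y := by
  unfold ent
  congr 1
  apply Finset.sum_congr rfl
  intro ω _
  rw [probOf_fiber_congr (p := p) ω (fun ω' => h ω' ω)]

lemma condMI_congr {X : Ω → α} {Y : Ω → β} {Z : Ω → γ}
    {α' β' γ' : Type} [DecidableEq α'] [DecidableEq β'] [DecidableEq γ']
    {X' : Ω → α'} {Y' : Ω → β'} {Z' : Ω → γ'}
    (hX : ∀ ω ω', X ω = X ω' ↔ X' ω = X' ω')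
    (hY : ∀ ω ω', Y ω = Y ω' ↔ Y' ω = Y' ω')
    (hZ : ∀ ω ω', Z ω = Z ω' ↔ Z' ω = Z' ω') :
    condMI p X Y Z = condMI p X' Y' Z' := by
  unfold condMI
  rw [ent_congr (Y := fun ω => (X' ω, Z' ω)) (fun ω ω' => by
        simp [Prod.ext_iff, hX ω ω', hZ ω ω']),
      ent_congr (X := fun ω => (Y ω, Z ω)) (Y := fun ω => (Y' ω, Z' ω)) (fun ω ω' => by
        simp [Prod.ext_iff, hY ω ω', hZ ω ω']),
      ent_congr (X := fun ω => (X ω, Y ω, Z ω)) (Y := fun ω => (X' ω, Y' ω, Z' ω)) (fun ω ω' => by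
        simp [Prod.ext_iff, hX ω ω', hY ω ω', hZ ω ω']),
      ent_congr (X := Z) (Y := Z') hZ]

lemma condMI_comm (X : Ω → α) (Y : Ω → β) (Z : Ω → γ) :
    condMI p X Y Z = condMI p Y X Z := by
  unfold condMI
  rw [ent_congr (X := fun ω => (X ω, Y ω, Z ω)) (Y := fun ω => (Y ω, X ω, Z ω)) (fun ω ω' => by
    simp [Prod.ext_iff]; tauto)]
  ring

lemma chainMI (X : Ω → α) (W : Ω → δ) (Y : Ω → β) (Z : Ω → γ) :
    condMI p (fun ω => (X ω, W ω)) Y Z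
      = condMI p X Y Z + condMI p W Y (fun ω => (X ω, Z ω)) := by
  unfold condMI
  rw [ent_congr (X := fun ω => (W ω, (X ω, Z ω))) (Y := fun ω => ((X ω, W ω), Z ω)) (fun ω ω' => by
        simp [Prod.ext_iff]; tauto),
      ent_congr (X := fun ω => (Y ω, (X ω, Z ω))) (Y := fun ω => (X ω, Y ω, Z ω)) (fun ω ω' => by
        simp [Prod.ext_iff]; tauto),
      ent_congr (X := fun ω => (W ω, Y ω, (X ω, Z ω))) (Y := fun ω => ((X ω, W ω), Y ω, Z ω)) (fun ω ω' => by
        simp [Prod.ext_iff]; tauto)]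
  ring

lemma condMI_const_left (c : α) (Y : Ω → β) (Z : Ω → γ) :
    condMI p (fun _ => c) Y Z = 0 := by
  unfold condMI
  rw [ent_congr (X := fun ω => ((fun _ : Ω => c) ω, Z ω)) (Y := Z) (fun ω ω' => by simp),
      ent_congr (X := fun ω => ((fun _ : Ω => c) ω, Y ω, Z ω)) (Y := fun ω => (Y ω, Z ω)) (fun ω ω' => by simp)]
  ring

end Core
section Masks

variable {N : ℕ} {𝓐 : Fin N → Type}

lemma mask_eq_iff {S : Finset (Fin N)} {x x' : ∀ k, 𝓐 k} :
    mask S x = mask S x' ↔ ∀ k ∈ S, x k = x' k := by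
  constructor
  · intro h k hk
    have := congrFun h k
    simpa [mask, hk] using this
  · intro h
    funext k
    unfold mask
    split
    · exact congrArg some (h k (by assumption))
    · rfl

lemma mask_union_iff (S A : Finset (Fin N)) (x x' : ∀ k, 𝓐 k) :
    mask (S ∪ A) x = mask (S ∪ A) x' ↔ (mask S x = mask S x' ∧ mask A x = mask A x') := by
  rw [mask_eq_iff, mask_eq_iff, mask_eq_iff]
  constructor
  · intro h
    exact ⟨fun k hk => h k (Finset.mem_union_left _ hk),
           fun k hk => h k (Finset.mem_union_right _ hk)⟩
  · rintro ⟨h1, h2⟩ k hk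
    rcases Finset.mem_union.mp hk with hk | hk
    · exact h1 k hk
    · exact h2 k hk

lemma mask_empty (x : ∀ k, 𝓐 k) : mask (∅ : Finset (Fin N)) x = fun _ => none := by
  funext k
  simp [mask]

end Masks
section Nonneg

variable {Ω : Type} [Fintype Ω] {α β γ : Type}
  [DecidableEq α] [DecidableEq β] [DecidableEq γ]
  [Fintype α] [Fintype β] [Fintype γ]
  {p : Ω → ℝ}

private lemma reorder3 {α β γ : Type} [Fintype α] [Fintype β] [Fintype γ]
    (f : α → β → γ → ℝ) :
    (∑ v : α × β × γ, f v.1 v.2.1 v.2.2) = ∑ c, ∑ a, ∑ b, f a b c :=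
  calc (∑ v : α × β × γ, f v.1 v.2.1 v.2.2)
      = ∑ a, ∑ w : β × γ, f a w.1 w.2 := by rw [Fintype.sum_prod_type]
    _ = ∑ a, ∑ b, ∑ c, f a b c := Finset.sum_congr rfl fun _ _ => by rw [Fintype.sum_prod_type]
    _ = ∑ b, ∑ a, ∑ c, f a b c := Finset.sum_comm
    _ = ∑ b, ∑ c, ∑ a, f a b c := Finset.sum_congr rfl fun _ _ => Finset.sum_comm
    _ = ∑ c, ∑ b, ∑ a, f a b c := Finset.sum_comm
    _ = ∑ c, ∑ a, ∑ b, f a b c := Finset.sum_congr rfl fun _ _ => Finset.sum_comm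

lemma condMI_nonneg (hp : ∀ ω, 0 ≤ p ω) (X : Ω → α) (Y : Ω → β) (Z : Ω → γ) :
    0 ≤ condMI p X Y Z := by
  classical
  set P3 : α × β × γ → ℝ := probOf p (fun ω => (X ω, Y ω, Z ω)) with hP3def
  set Pxz : α → γ → ℝ := fun a c => ∑ b, P3 (a, b, c) with hPxzdef
  set Pyz : β → γ → ℝ := fun b c => ∑ a, P3 (a, b, c) with hPyzdef
  set Pz : γ → ℝ := fun c => ∑ a, ∑ b, P3 (a, b, c) with hPzdef
  have hP3nn : ∀ v, 0 ≤ P3 v := fun v => probOf_nonneg hp _ v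
  have hPxznn : ∀ a c, 0 ≤ Pxz a c := fun a c =>
    Finset.sum_nonneg fun b _ => hP3nn _
  have hPyznn : ∀ b c, 0 ≤ Pyz b c := fun b c =>
    Finset.sum_nonneg fun a _ => hP3nn _
  have hPznn : ∀ c, 0 ≤ Pz c := fun c =>
    Finset.sum_nonneg fun a _ => Finset.sum_nonneg fun b _ => hP3nn _
  have hPzgeXZ : ∀ a c, Pxz a c ≤ Pz c := by
    intro a c
    exact Finset.single_le_sum (f := fun a => ∑ b, P3 (a, b, c))
      (fun a _ => Finset.sum_nonneg fun b _ => hP3nn _) (Finset.mem_univ a)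
  have hXZge : ∀ v : α × β × γ, P3 v ≤ Pxz v.1 v.2.2 :=
    fun v => Finset.single_le_sum (f := fun b => P3 (v.1, b, v.2.2))
      (fun b _ => hP3nn _) (Finset.mem_univ v.2.1)
  have hYZge : ∀ v : α × β × γ, P3 v ≤ Pyz v.2.1 v.2.2 :=
    fun v => Finset.single_le_sum (f := fun a => P3 (a, v.2.1, v.2.2))
      (fun a _ => hP3nn _) (Finset.mem_univ v.1)
  -- pointwise collapses
  have collapseB : ∀ (ω' : Ω) (a : α) (c : γ),
      (∑ b, if (X ω', Y ω', Z ω') = (a, b, c) then p ω' else 0)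
        = (if (X ω', Z ω') = (a, c) then p ω' else 0) := by
    intro ω' a c
    by_cases hac : X ω' = a ∧ Z ω' = c
    · rw [if_pos (by simp [Prod.ext_iff, hac.1, hac.2])]
      rw [Finset.sum_eq_single (Y ω')]
      · rw [if_pos (by simp [Prod.ext_iff, hac.1, hac.2])]
      · intro b _ hb
        rw [if_neg]
        intro h
        simp only [Prod.ext_iff] at h
        exact hb h.2.1.symm
      · intro h; exact absurd (Finset.mem_univ _) h
    · rw [if_neg (by simp only [Prod.ext_iff]; tauto)]
      apply Finset.sum_eq_zero
      intro b _
      rw [if_neg]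
      intro h
      simp only [Prod.ext_iff] at h
      exact hac ⟨h.1, h.2.2⟩
  have collapseA : ∀ (ω' : Ω) (b : β) (c : γ),
      (∑ a, if (X ω', Y ω', Z ω') = (a, b, c) then p ω' else 0)
        = (if (Y ω', Z ω') = (b, c) then p ω' else 0) := by
    intro ω' b c
    by_cases hbc : Y ω' = b ∧ Z ω' = c
    · rw [if_pos (by simp [Prod.ext_iff, hbc.1, hbc.2])]
      rw [Finset.sum_eq_single (X ω')]
      · rw [if_pos (by simp [Prod.ext_iff, hbc.1, hbc.2])]
      · intro a _ ha
        rw [if_neg]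
        intro h
        simp only [Prod.ext_iff] at h
        exact ha h.1.symm
      · intro h; exact absurd (Finset.mem_univ _) h
    · rw [if_neg (by simp only [Prod.ext_iff]; tauto)]
      apply Finset.sum_eq_zero
      intro a _
      rw [if_neg]
      intro h
      simp only [Prod.ext_iff] at h
      exact hbc ⟨h.2.1, h.2.2⟩
  have collapseBonly : ∀ (ω' : Ω) (c : γ),
      (∑ b, if (Y ω', Z ω') = (b, c) then p ω' else 0)
        = (if Z ω' = c then p ω' else 0) := by
    intro ω' c
    by_cases hc : Z ω' = c
    · rw [if_pos hc, Finset.sum_eq_single (Y ω')]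
      · rw [if_pos (by simp [Prod.ext_iff, hc])]
      · intro b _ hb
        rw [if_neg]
        intro h
        simp only [Prod.ext_iff] at h
        exact hb h.1.symm
      · intro h; exact absurd (Finset.mem_univ _) h
    · rw [if_neg hc]
      apply Finset.sum_eq_zero
      intro b _
      rw [if_neg]
      intro h
      simp only [Prod.ext_iff] at h
      exact hc h.2
  -- marginal identifications
  have hxz : ∀ ω, probOf p (fun ω' => (X ω', Z ω')) (X ω, Z ω) = Pxz (X ω) (Z ω) := by
    intro ω
    rw [hPxzdef]
    simp only [hP3def, probOf]
    rw [Finset.sum_comm]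
    exact Finset.sum_congr rfl fun ω' _ => (collapseB ω' (X ω) (Z ω)).symm
  have hyz : ∀ ω, probOf p (fun ω' => (Y ω', Z ω')) (Y ω, Z ω) = Pyz (Y ω) (Z ω) := by
    intro ω
    rw [hPyzdef]
    simp only [hP3def, probOf]
    rw [Finset.sum_comm]
    exact Finset.sum_congr rfl fun ω' _ => (collapseA ω' (Y ω) (Z ω)).symm
  have hz : ∀ ω, probOf p Z (Z ω) = Pz (Z ω) := by
    intro ω
    rw [hPzdef]
    simp only [hP3def, probOf]
    refine Eq.symm ?_
    calc (∑ a, ∑ b, ∑ ω', if (X ω', Y ω', Z ω') = (a, b, Z ω) then p ω' else 0)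
        = ∑ a, ∑ ω', ∑ b, if (X ω', Y ω', Z ω') = (a, b, Z ω) then p ω' else 0 :=
          Finset.sum_congr rfl fun a _ => Finset.sum_comm
      _ = ∑ ω', ∑ a, ∑ b, if (X ω', Y ω', Z ω') = (a, b, Z ω) then p ω' else 0 :=
          Finset.sum_comm
      _ = ∑ ω', if Z ω' = Z ω then p ω' else 0 := by
          refine Finset.sum_congr rfl fun ω' _ => ?_
          calc (∑ a, ∑ b, if (X ω', Y ω', Z ω') = (a, b, Z ω) then p ω' else 0)
              = ∑ b, ∑ a, if (X ω', Y ω', Z ω') = (a, b, Z ω) then p ω' else 0 :=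
                Finset.sum_comm
            _ = ∑ b, if (Y ω', Z ω') = (b, Z ω) then p ω' else 0 :=
                Finset.sum_congr rfl fun b _ => collapseA ω' b (Z ω)
            _ = if Z ω' = Z ω then p ω' else 0 := collapseBonly ω' (Z ω)
  -- entropies as sums over Pxz etc.
  have e1 : ent p (fun ω => (X ω, Z ω)) = -∑ ω, p ω * Real.log (Pxz (X ω) (Z ω)) := by
    unfold ent; congr 1; exact Finset.sum_congr rfl fun ω _ => by rw [hxz ω]
  have e2 : ent p (fun ω => (Y ω, Z ω)) = -∑ ω, p ω * Real.log (Pyz (Y ω) (Z ω)) := by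
    unfold ent; congr 1; exact Finset.sum_congr rfl fun ω _ => by rw [hyz ω]
  have e3 : ent p (fun ω => (X ω, Y ω, Z ω))
      = -∑ ω, p ω * Real.log (P3 (X ω, Y ω, Z ω)) := by
    unfold ent; rw [hP3def]
  have e4 : ent p Z = -∑ ω, p ω * Real.log (Pz (Z ω)) := by
    unfold ent; congr 1; exact Finset.sum_congr rfl fun ω _ => by rw [hz ω]
  have main : condMI p X Y Z
      = ∑ ω, (p ω * Real.log (P3 (X ω, Y ω, Z ω)) + p ω * Real.log (Pz (Z ω))
          - p ω * Real.log (Pxz (X ω) (Z ω)) - p ω * Real.log (Pyz (Y ω) (Z ω))) := by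
    unfold condMI
    rw [e1, e2, e3, e4]
    rw [show ∀ A B C D : ℝ, -A + -B - -C - -D = (C + D) - (A + B) from fun _ _ _ _ => by ring]
    rw [← Finset.sum_add_distrib, ← Finset.sum_add_distrib, ← Finset.sum_sub_distrib]
    exact Finset.sum_congr rfl fun ω _ => by ring
  set t : α × β × γ → ℝ :=
    fun v => Pxz v.1 v.2.2 * Pyz v.2.1 v.2.2 / (P3 v * Pz v.2.2) with htdef
  have hterm : ∀ ω, p ω - p ω * t (X ω, Y ω, Z ω)
      ≤ p ω * Real.log (P3 (X ω, Y ω, Z ω)) + p ω * Real.log (Pz (Z ω))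
          - p ω * Real.log (Pxz (X ω) (Z ω)) - p ω * Real.log (Pyz (Y ω) (Z ω)) := by
    intro ω
    rcases (hp ω).eq_or_lt with h0 | hpos
    · rw [← h0]; simp
    · have hP3pos : 0 < P3 (X ω, Y ω, Z ω) := lt_of_lt_of_le hpos (by
        rw [hP3def]; exact le_probOf hp _ ω)
      have hPxzpos : 0 < Pxz (X ω) (Z ω) := lt_of_lt_of_le hP3pos (hXZge _)
      have hPyzpos : 0 < Pyz (Y ω) (Z ω) := lt_of_lt_of_le hP3pos (hYZge _)
      have hPzpos : 0 < Pz (Z ω) := lt_of_lt_of_le hPxzpos (hPzgeXZ _ _)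
      have htpos : 0 < t (X ω, Y ω, Z ω) := by
        rw [htdef]
        exact div_pos (mul_pos hPxzpos hPyzpos) (mul_pos hP3pos hPzpos)
      have hlog : Real.log (t (X ω, Y ω, Z ω)) ≤ t (X ω, Y ω, Z ω) - 1 :=
        Real.log_le_sub_one_of_pos htpos
      have hlogt : Real.log (t (X ω, Y ω, Z ω))
          = Real.log (Pxz (X ω) (Z ω)) + Real.log (Pyz (Y ω) (Z ω))
            - Real.log (P3 (X ω, Y ω, Z ω)) - Real.log (Pz (Z ω)) := by
        rw [htdef]
        dsimp only
        rw [Real.log_div (by positivity) (by positivity),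
            Real.log_mul (ne_of_gt hPxzpos) (ne_of_gt hPyzpos),
            Real.log_mul (ne_of_gt hP3pos) (ne_of_gt hPzpos)]
        ring
      have h5 : p ω * Real.log (t (X ω, Y ω, Z ω))
          ≤ p ω * (t (X ω, Y ω, Z ω) - 1) := mul_le_mul_of_nonneg_left hlog hpos.le
      have h6 : p ω * Real.log (P3 (X ω, Y ω, Z ω)) + p ω * Real.log (Pz (Z ω))
          - p ω * Real.log (Pxz (X ω) (Z ω)) - p ω * Real.log (Pyz (Y ω) (Z ω))
          = -(p ω * Real.log (t (X ω, Y ω, Z ω))) := by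
        rw [hlogt]; ring
      rw [h6]
      nlinarith [h5]
  have step1 : (∑ ω, p ω) - (∑ ω, p ω * t (X ω, Y ω, Z ω)) ≤ condMI p X Y Z := by
    rw [main, ← Finset.sum_sub_distrib]
    exact Finset.sum_le_sum fun ω _ => hterm ω
  have hgroup : (∑ ω, p ω * t (X ω, Y ω, Z ω)) = ∑ v : α × β × γ, P3 v * t v := by
    have h1 : ∀ v : α × β × γ, P3 v * t v
        = ∑ ω, (if (X ω, Y ω, Z ω) = v then p ω * t v else 0) := by
      intro v
      rw [hP3def]
      show probOf p (fun ω => (X ω, Y ω, Z ω)) v * t v = _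
      rw [probOf, Finset.sum_mul]
      exact Finset.sum_congr rfl fun ω _ => by rw [ite_mul, zero_mul]
    rw [Finset.sum_congr rfl fun v _ => h1 v, Finset.sum_comm]
    refine Finset.sum_congr rfl fun ω _ => ?_
    rw [Finset.sum_ite_eq]
    simp
  have hP3tot : (∑ v : α × β × γ, P3 v) = ∑ ω, p ω := by
    rw [hP3def]
    show (∑ v : α × β × γ, probOf p (fun ω => (X ω, Y ω, Z ω)) v) = _
    simp only [probOf]
    rw [Finset.sum_comm]
    refine Finset.sum_congr rfl fun ω _ => ?_
    rw [Finset.sum_ite_eq]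
    simp
  have hPztot : (∑ c, Pz c) = ∑ v : α × β × γ, P3 v := by
    rw [hPzdef]
    rw [show (∑ v : α × β × γ, P3 v) = ∑ v : α × β × γ,
        (fun a b c => P3 (a, b, c)) v.1 v.2.1 v.2.2 from Finset.sum_congr rfl fun v _ => rfl]
    rw [reorder3 (fun a b c => P3 (a, b, c))]
  have hsum1 : (∑ v : α × β × γ, P3 v * t v)
      ≤ ∑ v : α × β × γ, Pxz v.1 v.2.2 * Pyz v.2.1 v.2.2 / Pz v.2.2 := by
    refine Finset.sum_le_sum fun v _ => ?_
    rcases (hP3nn v).eq_or_lt with h0 | hP3pos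
    · rw [← h0, zero_mul]
      exact div_nonneg (mul_nonneg (hPxznn _ _) (hPyznn _ _)) (hPznn _)
    · have hPzpos : 0 < Pz v.2.2 :=
        lt_of_lt_of_le hP3pos (le_trans (hXZge v) (hPzgeXZ _ _))
      rw [htdef]
      dsimp only
      rw [mul_div_assoc']
      rw [show P3 v * (Pxz v.1 v.2.2 * Pyz v.2.1 v.2.2)
          = Pxz v.1 v.2.2 * Pyz v.2.1 v.2.2 * P3 v from by ring]
      rw [show P3 v * Pz v.2.2 = Pz v.2.2 * P3 v from by ring]
      rw [mul_div_mul_right _ _ (ne_of_gt hP3pos)]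
  have hsum2 : (∑ v : α × β × γ, Pxz v.1 v.2.2 * Pyz v.2.1 v.2.2 / Pz v.2.2)
      ≤ ∑ c, Pz c := by
    rw [reorder3 (fun a b c => Pxz a c * Pyz b c / Pz c)]
    refine Finset.sum_le_sum fun c _ => ?_
    have hfact : (∑ a, ∑ b, Pxz a c * Pyz b c / Pz c)
        = (∑ a, Pxz a c) * (∑ b, Pyz b c) / Pz c := by
      rw [Finset.sum_mul_sum, Finset.sum_div]
      exact Finset.sum_congr rfl fun a _ => by rw [Finset.sum_div]
    rw [hfact]
    have hA : (∑ a, Pxz a c) = Pz c := by rw [hPzdef, hPxzdef]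
    have hB : (∑ b, Pyz b c) = Pz c := by
      rw [hPzdef, hPyzdef]
      exact Finset.sum_comm
    rw [hA, hB]
    rcases (hPznn c).eq_or_lt with h0 | hpos
    · rw [← h0]; simp
    · rw [mul_div_assoc, div_self (ne_of_gt hpos), mul_one]
  linarith [step1, hgroup, hP3tot, hPztot, hsum1, hsum2]

end Nonneg
section Final

variable {N : ℕ} {𝓠 𝓧 𝓨 : Type} {𝓧r 𝓩 𝓩h : Fin N → Type}
  [Fintype 𝓠] [DecidableEq 𝓠] [Fintype 𝓧] [DecidableEq 𝓧]
  [Fintype 𝓨] [DecidableEq 𝓨]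
  [∀ k, Fintype (𝓧r k)] [∀ k, DecidableEq (𝓧r k)]
  [∀ k, Fintype (𝓩 k)] [∀ k, DecidableEq (𝓩 k)]
  [∀ k, Fintype (𝓩h k)] [∀ k, DecidableEq (𝓩h k)]

lemma Qdest_empty (p : 𝓠 × 𝓧 × (∀ k, 𝓧r k) × (∀ k, 𝓩 k) × (∀ k, 𝓩h k) × 𝓨 → ℝ)
    (V T : Finset (Fin N)) : Qdest p V T ∅ = 0 := by
  unfold Qdest
  rw [show (fun ω : 𝓠 × 𝓧 × (∀ k, 𝓧r k) × (∀ k, 𝓩 k) × (∀ k, 𝓩h k) × 𝓨 =>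
        mask (∅ : Finset (Fin N)) ω.2.2.1)
      = (fun _ => (fun _ => none : ∀ k, Option (𝓧r k))) from
    funext fun ω => mask_empty _]
  rw [show (fun ω : 𝓠 × 𝓧 × (∀ k, 𝓧r k) × (∀ k, 𝓩 k) × (∀ k, 𝓩h k) × 𝓨 =>
        mask (∅ : Finset (Fin N)) ω.2.2.2.1)
      = (fun _ => (fun _ => none : ∀ k, Option (𝓩 k))) from
    funext fun ω => mask_empty _]
  rw [condMI_const_left, condMI_const_left, sub_zero]

end Final
section Key

variable {N : ℕ} {𝓠 𝓧 𝓨 : Type} {𝓧r 𝓩 𝓩h : Fin N → Type}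
  [Fintype 𝓠] [DecidableEq 𝓠] [Fintype 𝓧] [DecidableEq 𝓧]
  [Fintype 𝓨] [DecidableEq 𝓨]
  [∀ k, Fintype (𝓧r k)] [∀ k, DecidableEq (𝓧r k)]
  [∀ k, Fintype (𝓩 k)] [∀ k, DecidableEq (𝓩 k)]
  [∀ k, Fintype (𝓩h k)] [∀ k, DecidableEq (𝓩h k)]

lemma Rdest_key
    (p : 𝓠 × 𝓧 × (∀ k, 𝓧r k) × (∀ k, 𝓩 k) × (∀ k, 𝓩h k) × 𝓨 → ℝ)
    (hp : ∀ ω, 0 ≤ p ω)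
    (V T A S : Finset (Fin N)) (hA : A ⊆ T) (hS : S ⊆ T \ A) :
    Rdest p V T (S ∪ A) ≤ Rdest p V (T \ A) S + Qdest p V T A := by
  classical
  -- Finset bookkeeping
  have hSc0 : T \ (S ∪ A) = (T \ A) \ S := by
    ext k; simp only [Finset.mem_sdiff, Finset.mem_union]; tauto
  have hBdec : T \ A = S ∪ ((T \ A) \ S) := by
    ext k
    simp only [Finset.mem_sdiff, Finset.mem_union]
    constructor
    · intro h
      by_cases hk : k ∈ S
      · exact Or.inl hk
      · exact Or.inr ⟨h, hk⟩
    · rintro (hk | hk)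
      · exact Finset.mem_sdiff.mp (hS hk)
      · exact hk.1
  have hTV : T ∪ Vᶜ = A ∪ ((T \ A) ∪ Vᶜ) := by
    ext k
    simp only [Finset.mem_union, Finset.mem_sdiff]
    constructor
    · rintro (hk | hk)
      · by_cases hkA : k ∈ A
        · exact Or.inl hkA
        · exact Or.inr (Or.inl ⟨hk, hkA⟩)
      · exact Or.inr (Or.inr hk)
    · rintro (hk | hk | hk)
      · exact Or.inl (hA hk)
      · exact Or.inl hk.1
      · exact Or.inr hk
  have hBV : (T \ A) ∪ Vᶜ = Vᶜ ∪ (S ∪ ((T \ A) \ S)) := by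
    rw [← hBdec]; exact Finset.union_comm _ _
  -- abbreviations for the random variables
  set Sc : Finset (Fin N) := (T \ A) \ S with hScdef
  rw [Rdest, Rdest, Qdest, hSc0, ← hScdef]
  set XX : 𝓠 × 𝓧 × (∀ k, 𝓧r k) × (∀ k, 𝓩 k) × (∀ k, 𝓩h k) × 𝓨 → 𝓧 :=
    fun ω => ω.2.1 with hXX
  set QQ : 𝓠 × 𝓧 × (∀ k, 𝓧r k) × (∀ k, 𝓩 k) × (∀ k, 𝓩h k) × 𝓨 → 𝓠 :=
    fun ω => ω.1 with hQQ
  set XR : (𝓠 × 𝓧 × (∀ k, 𝓧r k) × (∀ k, 𝓩 k) × (∀ k, 𝓩h k) × 𝓨) → ∀ k, 𝓧r k :=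
    fun ω => ω.2.2.1 with hXR
  set ZZ : (𝓠 × 𝓧 × (∀ k, 𝓧r k) × (∀ k, 𝓩 k) × (∀ k, 𝓩h k) × 𝓨) → ∀ k, 𝓩 k :=
    fun ω => ω.2.2.2.1 with hZZ
  set ZH : (𝓠 × 𝓧 × (∀ k, 𝓧r k) × (∀ k, 𝓩 k) × (∀ k, 𝓩h k) × 𝓨) → ∀ k, 𝓩h k :=
    fun ω => ω.2.2.2.2.1 with hZH
  set YY : (𝓠 × 𝓧 × (∀ k, 𝓧r k) × (∀ k, 𝓩 k) × (∀ k, 𝓩h k) × 𝓨) → 𝓨 :=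
    fun ω => ω.2.2.2.2.2 with hYY
  -- the six mutual-information terms
  -- first parts
  have hF :
      condMI p (fun ω => (XX ω, mask Vᶜ (XR ω), mask (S ∪ A) (XR ω)))
        (fun ω => (mask Sc (ZH ω), YY ω)) (fun ω => (mask Sc (XR ω), QQ ω))
      = condMI p (fun ω => (XX ω, mask Vᶜ (XR ω), mask S (XR ω)))
          (fun ω => (mask Sc (ZH ω), YY ω)) (fun ω => (mask Sc (XR ω), QQ ω))
        + condMI p (fun ω => mask A (XR ω))
            (fun ω => (mask Sc (ZH ω), YY ω))
            (fun ω => (XX ω, mask ((T \ A) ∪ Vᶜ) (XR ω), QQ ω)) := by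
    have c1 : condMI p (fun ω => (XX ω, mask Vᶜ (XR ω), mask (S ∪ A) (XR ω)))
        (fun ω => (mask Sc (ZH ω), YY ω)) (fun ω => (mask Sc (XR ω), QQ ω))
        = condMI p (fun ω => ((XX ω, mask Vᶜ (XR ω), mask S (XR ω)), mask A (XR ω)))
          (fun ω => (mask Sc (ZH ω), YY ω)) (fun ω => (mask Sc (XR ω), QQ ω)) := by
      apply condMI_congr
      · intro ω ω'; simp only [Prod.ext_iff, mask_union_iff]; tauto
      · intro ω ω'; exact Iff.rfl
      · intro ω ω'; exact Iff.rfl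
    have c2 := chainMI (p := p)
      (X := fun ω => (XX ω, mask Vᶜ (XR ω), mask S (XR ω)))
      (W := fun ω => mask A (XR ω))
      (Y := fun ω => (mask Sc (ZH ω), YY ω))
      (Z := fun ω => (mask Sc (XR ω), QQ ω))
    have c3 : condMI p (fun ω => mask A (XR ω))
        (fun ω => (mask Sc (ZH ω), YY ω))
        (fun ω => ((XX ω, mask Vᶜ (XR ω), mask S (XR ω)), (mask Sc (XR ω), QQ ω)))
        = condMI p (fun ω => mask A (XR ω))
          (fun ω => (mask Sc (ZH ω), YY ω))
          (fun ω => (XX ω, mask ((T \ A) ∪ Vᶜ) (XR ω), QQ ω)) := by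
      apply condMI_congr
      · intro ω ω'; exact Iff.rfl
      · intro ω ω'; exact Iff.rfl
      · intro ω ω'; simp only [Prod.ext_iff, hBV, mask_union_iff]; tauto
    rw [c1, c2, c3]
  -- Q first part decomposition
  have hQ :
      condMI p (fun ω => mask A (XR ω))
        (fun ω => (mask (T \ A) (ZH ω), YY ω))
        (fun ω => (XX ω, mask ((T \ A) ∪ Vᶜ) (XR ω), QQ ω))
      = condMI p (fun ω => mask A (XR ω))
          (fun ω => (mask Sc (ZH ω), YY ω))
          (fun ω => (XX ω, mask ((T \ A) ∪ Vᶜ) (XR ω), QQ ω))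
        + condMI p (fun ω => mask A (XR ω))
            (fun ω => mask S (ZH ω))
            (fun ω => ((mask Sc (ZH ω), YY ω), (XX ω, mask ((T \ A) ∪ Vᶜ) (XR ω), QQ ω))) := by
    have q1 : condMI p (fun ω => mask A (XR ω))
        (fun ω => (mask (T \ A) (ZH ω), YY ω))
        (fun ω => (XX ω, mask ((T \ A) ∪ Vᶜ) (XR ω), QQ ω))
        = condMI p (fun ω => mask A (XR ω))
          (fun ω => ((mask Sc (ZH ω), YY ω), mask S (ZH ω)))
          (fun ω => (XX ω, mask ((T \ A) ∪ Vᶜ) (XR ω), QQ ω)) := by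
      apply condMI_congr
      · intro ω ω'; exact Iff.rfl
      · intro ω ω'
        rw [show T \ A = S ∪ Sc from hBdec]
        simp only [Prod.ext_iff, mask_union_iff]; tauto
      · intro ω ω'; exact Iff.rfl
    have q2 := condMI_comm (p := p)
      (X := fun ω => mask A (XR ω))
      (Y := fun ω => ((mask Sc (ZH ω), YY ω), mask S (ZH ω)))
      (Z := fun ω => (XX ω, mask ((T \ A) ∪ Vᶜ) (XR ω), QQ ω))
    have q3 := chainMI (p := p)
      (X := fun ω => (mask Sc (ZH ω), YY ω))
      (W := fun ω => mask S (ZH ω))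
      (Y := fun ω => mask A (XR ω))
      (Z := fun ω => (XX ω, mask ((T \ A) ∪ Vᶜ) (XR ω), QQ ω))
    have q4 := condMI_comm (p := p)
      (X := fun ω => (mask Sc (ZH ω), YY ω))
      (Y := fun ω => mask A (XR ω))
      (Z := fun ω => (XX ω, mask ((T \ A) ∪ Vᶜ) (XR ω), QQ ω))
    have q5 := condMI_comm (p := p)
      (X := fun ω => mask S (ZH ω))
      (Y := fun ω => mask A (XR ω))
      (Z := fun ω => ((mask Sc (ZH ω), YY ω), (XX ω, mask ((T \ A) ∪ Vᶜ) (XR ω), QQ ω)))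
    rw [q1, q2, q3, ← q4, ← q5]
  -- second parts
  -- G_B = M' + IS - K1
  have hGB :
      condMI p (fun ω => mask S (ZZ ω)) (fun ω => mask S (ZH ω))
        (fun ω => (XX ω, mask ((T \ A) ∪ Vᶜ) (XR ω), mask Sc (ZH ω), YY ω, QQ ω))
      = condMI p (fun ω => mask A (XR ω)) (fun ω => mask S (ZH ω))
          (fun ω => ((mask Sc (ZH ω), YY ω), (XX ω, mask ((T \ A) ∪ Vᶜ) (XR ω), QQ ω)))
        + condMI p (fun ω => mask S (ZZ ω)) (fun ω => mask S (ZH ω))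
            (fun ω => (XX ω, mask (T ∪ Vᶜ) (XR ω), mask Sc (ZH ω), YY ω, QQ ω))
        - condMI p (fun ω => mask A (XR ω)) (fun ω => mask S (ZH ω))
            (fun ω => (mask S (ZZ ω),
              (XX ω, mask ((T \ A) ∪ Vᶜ) (XR ω), mask Sc (ZH ω), YY ω, QQ ω))) := by
    have j1 := chainMI (p := p)
      (X := fun ω => mask A (XR ω))
      (W := fun ω => mask S (ZZ ω))
      (Y := fun ω => mask S (ZH ω))
      (Z := fun ω => (XX ω, mask ((T \ A) ∪ Vᶜ) (XR ω), mask Sc (ZH ω), YY ω, QQ ω))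
    have j2 : condMI p (fun ω => (mask A (XR ω), mask S (ZZ ω)))
        (fun ω => mask S (ZH ω))
        (fun ω => (XX ω, mask ((T \ A) ∪ Vᶜ) (XR ω), mask Sc (ZH ω), YY ω, QQ ω))
        = condMI p (fun ω => (mask S (ZZ ω), mask A (XR ω)))
          (fun ω => mask S (ZH ω))
          (fun ω => (XX ω, mask ((T \ A) ∪ Vᶜ) (XR ω), mask Sc (ZH ω), YY ω, QQ ω)) := by
      apply condMI_congr
      · intro ω ω'; simp only [Prod.ext_iff]; tauto
      · intro ω ω'; exact Iff.rfl
      · intro ω ω'; exact Iff.rfl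
    have j3 := chainMI (p := p)
      (X := fun ω => mask S (ZZ ω))
      (W := fun ω => mask A (XR ω))
      (Y := fun ω => mask S (ZH ω))
      (Z := fun ω => (XX ω, mask ((T \ A) ∪ Vᶜ) (XR ω), mask Sc (ZH ω), YY ω, QQ ω))
    -- identify the two conditional terms
    have j4 : condMI p (fun ω => mask A (XR ω)) (fun ω => mask S (ZH ω))
        (fun ω => (XX ω, mask ((T \ A) ∪ Vᶜ) (XR ω), mask Sc (ZH ω), YY ω, QQ ω))
        = condMI p (fun ω => mask A (XR ω)) (fun ω => mask S (ZH ω))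
          (fun ω => ((mask Sc (ZH ω), YY ω), (XX ω, mask ((T \ A) ∪ Vᶜ) (XR ω), QQ ω))) := by
      apply condMI_congr
      · intro ω ω'; exact Iff.rfl
      · intro ω ω'; exact Iff.rfl
      · intro ω ω'; simp only [Prod.ext_iff]; tauto
    have j5 : condMI p (fun ω => mask S (ZZ ω)) (fun ω => mask S (ZH ω))
        (fun ω => (mask A (XR ω),
          (XX ω, mask ((T \ A) ∪ Vᶜ) (XR ω), mask Sc (ZH ω), YY ω, QQ ω)))
        = condMI p (fun ω => mask S (ZZ ω)) (fun ω => mask S (ZH ω))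
          (fun ω => (XX ω, mask (T ∪ Vᶜ) (XR ω), mask Sc (ZH ω), YY ω, QQ ω)) := by
      apply condMI_congr
      · intro ω ω'; exact Iff.rfl
      · intro ω ω'; exact Iff.rfl
      · intro ω ω'; simp only [Prod.ext_iff, hTV, mask_union_iff]; tauto
    have := j1.symm.trans (j2.trans j3)
    -- this : I(ZS;ZhS|D') + I(A; ZhS | (ZS,D')) = I(ZS;ZhS|D') ... rearrange
    -- from j1 = j2-chain: condMI (A,ZS) .. = both expansions equal
    linarith [j1, j2, j3, j4, j5]
  -- G_Q rewrite
  have hGQ :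
      condMI p (fun ω => mask A (ZZ ω)) (fun ω => mask A (ZH ω))
        (fun ω => (XX ω, mask (T ∪ Vᶜ) (XR ω), mask (T \ A) (ZH ω), YY ω, QQ ω))
      = condMI p (fun ω => mask A (ZZ ω)) (fun ω => mask A (ZH ω))
          (fun ω => (mask S (ZH ω),
            (XX ω, mask (T ∪ Vᶜ) (XR ω), mask Sc (ZH ω), YY ω, QQ ω))) := by
    apply condMI_congr
    · intro ω ω'; exact Iff.rfl
    · intro ω ω'; exact Iff.rfl
    · intro ω ω'
      rw [show T \ A = S ∪ Sc from hBdec]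
      simp only [Prod.ext_iff, mask_union_iff]; tauto
  -- G_T expansion (lower bound)
  have hGT :
      condMI p (fun ω => mask S (ZZ ω)) (fun ω => mask S (ZH ω))
        (fun ω => (XX ω, mask (T ∪ Vᶜ) (XR ω), mask Sc (ZH ω), YY ω, QQ ω))
      + condMI p (fun ω => mask A (ZZ ω)) (fun ω => mask A (ZH ω))
          (fun ω => (mask S (ZH ω),
            (XX ω, mask (T ∪ Vᶜ) (XR ω), mask Sc (ZH ω), YY ω, QQ ω)))
      ≤ condMI p (fun ω => mask (S ∪ A) (ZZ ω)) (fun ω => mask (S ∪ A) (ZH ω))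
          (fun ω => (XX ω, mask (T ∪ Vᶜ) (XR ω), mask Sc (ZH ω), YY ω, QQ ω)) := by
    set Z2 := fun ω : 𝓠 × 𝓧 × (∀ k, 𝓧r k) × (∀ k, 𝓩 k) × (∀ k, 𝓩h k) × 𝓨 =>
      (XX ω, mask (T ∪ Vᶜ) (XR ω), mask Sc (ZH ω), YY ω, QQ ω) with hZ2
    have g1 : condMI p (fun ω => mask (S ∪ A) (ZZ ω)) (fun ω => mask (S ∪ A) (ZH ω)) Z2
        = condMI p (fun ω => (mask S (ZZ ω), mask A (ZZ ω)))
          (fun ω => (mask S (ZH ω), mask A (ZH ω))) Z2 := by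
      apply condMI_congr
      · intro ω ω'; simp only [Prod.ext_iff, mask_union_iff]; try tauto
      · intro ω ω'; simp only [Prod.ext_iff, mask_union_iff]; try tauto
      · intro ω ω'; exact Iff.rfl
    -- chain in the second argument:
    have g2 := condMI_comm (p := p)
      (X := fun ω => (mask S (ZZ ω), mask A (ZZ ω)))
      (Y := fun ω => (mask S (ZH ω), mask A (ZH ω))) (Z := Z2)
    have g3 := chainMI (p := p)
      (X := fun ω => mask S (ZH ω)) (W := fun ω => mask A (ZH ω))
      (Y := fun ω => (mask S (ZZ ω), mask A (ZZ ω))) (Z := Z2)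
    have g4 := condMI_comm (p := p)
      (X := fun ω => mask S (ZH ω))
      (Y := fun ω => (mask S (ZZ ω), mask A (ZZ ω))) (Z := Z2)
    have g5 := condMI_comm (p := p)
      (X := fun ω => mask A (ZH ω))
      (Y := fun ω => (mask S (ZZ ω), mask A (ZZ ω)))
      (Z := fun ω => (mask S (ZH ω), Z2 ω))
    -- first bracket
    have g6 := chainMI (p := p)
      (X := fun ω => mask S (ZZ ω)) (W := fun ω => mask A (ZZ ω))
      (Y := fun ω => mask S (ZH ω)) (Z := Z2)
    have g6nn : 0 ≤ condMI p (fun ω => mask A (ZZ ω)) (fun ω => mask S (ZH ω))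
        (fun ω => (mask S (ZZ ω), Z2 ω)) := condMI_nonneg hp _ _ _
    -- second bracket
    have g7 : condMI p (fun ω => (mask S (ZZ ω), mask A (ZZ ω))) (fun ω => mask A (ZH ω))
        (fun ω => (mask S (ZH ω), Z2 ω))
        = condMI p (fun ω => (mask A (ZZ ω), mask S (ZZ ω))) (fun ω => mask A (ZH ω))
          (fun ω => (mask S (ZH ω), Z2 ω)) := by
      apply condMI_congr
      · intro ω ω'; simp only [Prod.ext_iff]; tauto
      · intro ω ω'; exact Iff.rfl
      · intro ω ω'; exact Iff.rfl
    have g8 := chainMI (p := p)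
      (X := fun ω => mask A (ZZ ω)) (W := fun ω => mask S (ZZ ω))
      (Y := fun ω => mask A (ZH ω)) (Z := fun ω => (mask S (ZH ω), Z2 ω))
    have g8nn : 0 ≤ condMI p (fun ω => mask S (ZZ ω)) (fun ω => mask A (ZH ω))
        (fun ω => (mask A (ZZ ω), (mask S (ZH ω), Z2 ω))) := condMI_nonneg hp _ _ _
    linarith [g1, g2, g3, g4, g5, g6, g6nn, g7, g8, g8nn]
  -- K1 nonneg
  have hK1 : 0 ≤ condMI p (fun ω => mask A (XR ω)) (fun ω => mask S (ZH ω))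
      (fun ω => (mask S (ZZ ω),
        (XX ω, mask ((T \ A) ∪ Vᶜ) (XR ω), mask Sc (ZH ω), YY ω, QQ ω))) :=
    condMI_nonneg hp _ _ _
  linarith [hF, hQ, hGB, hGQ, hGT, hK1]

end Key
theorem max_over_all_T_eq_max_over_Gamma
    {N : ℕ} {𝓠 𝓧 𝓨 : Type} {𝓧r 𝓩 𝓩h : Fin N → Type}
    [Fintype 𝓠] [DecidableEq 𝓠] [Fintype 𝓧] [DecidableEq 𝓧]
    [Fintype 𝓨] [DecidableEq 𝓨]
    [∀ k, Fintype (𝓧r k)] [∀ k, DecidableEq (𝓧r k)]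
    [∀ k, Fintype (𝓩 k)] [∀ k, DecidableEq (𝓩 k)]
    [∀ k, Fintype (𝓩h k)] [∀ k, DecidableEq (𝓩h k)]
    (W : 𝓧 → (∀ k, 𝓧r k) → ((∀ k, 𝓩 k) × 𝓨) → ℝ)
    (hW : ∀ x xs, IsPMF (W x xs))
    (V : Finset (Fin N))
    (pQ : 𝓠 → ℝ)
    (pS : 𝓠 → 𝓧 × (∀ k : {k : Fin N // k ∉ V}, 𝓧r k.1) → ℝ)
    (pXj : ∀ j : Fin N, 𝓠 → 𝓧r j → ℝ)
    (pZh : ∀ j : Fin N, 𝓠 → 𝓧r j → 𝓩 j → 𝓩h j → ℝ)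
    (hpQ : IsPMF pQ) (hpS : ∀ q, IsPMF (pS q))
    (hpXj : ∀ j q, IsPMF (pXj j q))
    (hpZh : ∀ j q xj zj, IsPMF (pZh j q xj zj))
    (p : 𝓠 × 𝓧 × (∀ k, 𝓧r k) × (∀ k, 𝓩 k) × (∀ k, 𝓩h k) × 𝓨 → ℝ)
    (hp : p = jointDist V W pQ pS pXj pZh) :
    -- (a) dropping a subset `A` with `Q_T(A) < 0` does not decrease the minimum
    (∀ T ⊆ V, ∀ A ⊆ T, Qdest p V T A < 0 →
      (⨅ S : {S : Finset (Fin N) // S ⊆ T}, Rdest p V T S.1)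
        ≤ ⨅ S : {S : Finset (Fin N) // S ⊆ T \ A}, Rdest p V (T \ A) S.1) ∧
    -- (b) the unconstrained and the `Υ(V)`-constrained maximizations coincide
    (⨆ T : {T : Finset (Fin N) // T ⊆ V},
        ⨅ S : {S : Finset (Fin N) // S ⊆ T.1}, Rdest p V T.1 S.1)
      = ⨆ T : {T : Finset (Fin N) // T ⊆ V ∧ ∀ S ⊆ T, 0 ≤ Qdest p V T S},
          ⨅ S : {S : Finset (Fin N) // S ⊆ T.1}, Rdest p V T.1 S.1 := by
  classical
  have hpnn : ∀ ω, 0 ≤ p ω := by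
    intro ω
    rw [hp]
    unfold jointDist
    refine mul_nonneg (mul_nonneg (mul_nonneg (mul_nonneg ?_ ?_) ?_) ?_) ?_
    · exact hpQ.1 _
    · exact (hpS _).1 _
    · exact Finset.prod_nonneg fun j _ => (hpXj j _).1 _
    · exact (hW _ _).1 _
    · exact Finset.prod_nonneg fun j _ => (hpZh j _ _ _).1 _
  have parta : ∀ T ⊆ V, ∀ A ⊆ T, Qdest p V T A < 0 →
      (⨅ S : {S : Finset (Fin N) // S ⊆ T}, Rdest p V T S.1)
        ≤ ⨅ S : {S : Finset (Fin N) // S ⊆ T \ A}, Rdest p V (T \ A) S.1 := by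
    intro T _ A hAT hQA
    have hbdd : BddBelow (Set.range fun S : {S : Finset (Fin N) // S ⊆ T} =>
        Rdest p V T S.1) := (Set.finite_range _).bddBelow
    haveI : Nonempty {S : Finset (Fin N) // S ⊆ T \ A} := ⟨⟨∅, Finset.empty_subset _⟩⟩
    refine le_ciInf fun S => ?_
    have h1 : (⨅ S : {S : Finset (Fin N) // S ⊆ T}, Rdest p V T S.1)
        ≤ Rdest p V T (S.1 ∪ A) :=
      ciInf_le hbdd ⟨S.1 ∪ A,
        Finset.union_subset (S.2.trans (Finset.sdiff_subset)) hAT⟩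
    have h2 := Rdest_key p hpnn V T A S.1 hAT S.2
    linarith
  refine ⟨parta, ?_⟩
  have hne : Nonempty {T : Finset (Fin N) // T ⊆ V ∧ ∀ S ⊆ T, 0 ≤ Qdest p V T S} := by
    refine ⟨⟨∅, Finset.empty_subset V, fun S hS => ?_⟩⟩
    rw [Finset.subset_empty.mp hS, Qdest_empty]
  have hbddR : BddAbove (Set.range fun T :
      {T : Finset (Fin N) // T ⊆ V ∧ ∀ S ⊆ T, 0 ≤ Qdest p V T S} =>
      ⨅ S : {S : Finset (Fin N) // S ⊆ T.1}, Rdest p V T.1 S.1) :=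
    (Set.finite_range _).bddAbove
  have hbddL : BddAbove (Set.range fun T : {T : Finset (Fin N) // T ⊆ V} =>
      ⨅ S : {S : Finset (Fin N) // S ⊆ T.1}, Rdest p V T.1 S.1) :=
    (Set.finite_range _).bddAbove
  apply le_antisymm
  · -- sup over all T ≤ sup over Υ
    have claim : ∀ n : ℕ, ∀ T : Finset (Fin N), T.card ≤ n → T ⊆ V →
        (⨅ S : {S : Finset (Fin N) // S ⊆ T}, Rdest p V T S.1)
          ≤ ⨆ T' : {T : Finset (Fin N) // T ⊆ V ∧ ∀ S ⊆ T, 0 ≤ Qdest p V T S},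
              ⨅ S : {S : Finset (Fin N) // S ⊆ T'.1}, Rdest p V T'.1 S.1 := by
      intro n
      induction n with
      | zero =>
        intro T hc hTV
        have hT0 : T = ∅ := Finset.card_eq_zero.mp (Nat.le_zero.mp hc)
        subst hT0
        exact le_ciSup hbddR ⟨∅, Finset.empty_subset V, fun S hS => by
          rw [Finset.subset_empty.mp hS, Qdest_empty]⟩
      | succ n ih =>
        intro T hc hTV
        by_cases hY : ∀ S ⊆ T, 0 ≤ Qdest p V T S
        · exact le_ciSup hbddR ⟨T, hTV, hY⟩
        · push_neg at hY
          obtain ⟨A, hAT, hQA'⟩ := hY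
          have hAne : A.Nonempty := by
            rcases Finset.eq_empty_or_nonempty A with h | h
            · exfalso
              rw [h, Qdest_empty] at hQA'
              exact lt_irrefl 0 hQA'
            · exact h
          have hcard : (T \ A).card ≤ n := by
            have hlt : (T \ A).card < T.card :=
              Finset.card_lt_card (Finset.sdiff_ssubset hAT hAne)
            omega
          exact (parta T hTV A hAT hQA').trans
            (ih (T \ A) hcard ((Finset.sdiff_subset).trans hTV))
    haveI : Nonempty {T : Finset (Fin N) // T ⊆ V} := ⟨⟨∅, Finset.empty_subset _⟩⟩
    exact ciSup_le fun T => claim T.1.card T.1 le_rfl T.2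
  · haveI : Nonempty {T : Finset (Fin N) // T ⊆ V} := ⟨⟨∅, Finset.empty_subset _⟩⟩
    exact ciSup_le fun T => le_ciSup hbddL ⟨T.1, T.2.1⟩
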